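/- Let N ≥ 2 and let r be an ultrametric on {1,…,N} with r(i,j) > 0 for i ≠ j, whose enumeration is length-minimal. Define the depths d_n(r) := (1/2)·max_{1 ≤ i,j ≤ n} r(i,j) for 1 ≤ n ≤ N. Then for every n with 2 ≤ n ≤ N and every k with 1 ≤ k ≤ n−1: r(k, n) = max( r(k, n−1), 2·( ℓ_n(r) − ℓ_{n−1}(r) − ( d_n(r) − d_{n−1}(r) ) ) ), where r(n−1, n−1) = 0 is understood in the case k = n−1. In particular, the distance matrix (r(i,j))_{1 ≤ i < j ≤ N} is determined recursively by the sequence (ℓ_1(r),…,ℓ_N(r)). -/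

import Mathlib

open Finset

/-- `r` is an ultrametric matrix on `{1,…,N}` (encoded by `Fin N`): nonnegative,
symmetric, vanishing on the diagonal, and satisfying the strong triangle inequality. -/
def IsUltramat {N : ℕ} (r : Fin N → Fin N → ℝ) : Prop :=
  (∀ i j, 0 ≤ r i j) ∧ (∀ i j, r i j = r j i) ∧ (∀ i, r i i = 0) ∧
    (∀ i j k, r i k ≤ max (r i j) (r j k))

/-- `ell r n` is the total length `ℓ_n(r)` of the subtree spanned by the first `n`
points: half the minimum of `Σ_{i=1}^n r(i,σ(i))` over single-`n`-cycle permutations `σ`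
of `{1,…,n}`, for `2 ≤ n ≤ N`; and `0` otherwise (in particular `ℓ_1(r) = 0`). -/
noncomputable def ell {N : ℕ} (r : Fin N → Fin N → ℝ) (n : ℕ) : ℝ :=
  if h : 2 ≤ n ∧ n ≤ N then
    (1 / 2) * sInf { x : ℝ | ∃ σ : Equiv.Perm (Fin n), σ.IsCycle ∧ σ.support = Finset.univ ∧
      x = ∑ i : Fin n, r (Fin.castLE h.2 i) (Fin.castLE h.2 (σ i)) }
  else 0

/-- The enumeration of the points of `r` is length-minimal: for every permutation `τ` of
`{1,…,N}`, the vector `(ℓ_1(r),…,ℓ_N(r))` is lexicographically at most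
`(ℓ_1(r^τ),…,ℓ_N(r^τ))`, where `r^τ(i,j) = r(τ(i),τ(j))`. -/
def LengthMinimal {N : ℕ} (r : Fin N → Fin N → ℝ) : Prop :=
  ∀ τ : Equiv.Perm (Fin N),
    (∀ n, n ≤ N → ell r n = ell (fun i j => r (τ i) (τ j)) n) ∨
    (∃ n, n ≤ N ∧ (∀ m, m < n → ell r m = ell (fun i j => r (τ i) (τ j)) m) ∧
      ell r n < ell (fun i j => r (τ i) (τ j)) n)

/-- `depthFn r n` is the depth `d_n(r) = (1/2)·max_{1 ≤ i,j ≤ n} r(i,j)` of the subtree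
spanned by the first `n` points, for `1 ≤ n ≤ N`; and `0` otherwise. -/
noncomputable def depthFn {N : ℕ} (r : Fin N → Fin N → ℝ) (n : ℕ) : ℝ :=
  if h : 1 ≤ n ∧ n ≤ N then
    (1 / 2) * sSup { x : ℝ | ∃ i j : Fin n, x = r (Fin.castLE h.2 i) (Fin.castLE h.2 j) }
  else 0

namespace Ultra

open Finset List


variable {α : Type*} (q : α → α → ℝ)

/-- sum of `q` along consecutive pairs of a list. -/
def psum : List α → ℝ
  | [] => 0
  | [_] => 0
  | a :: b :: l => q a b + psum (b :: l)

/-- cyclic sum of `q` along a list. -/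
def csum (l : List α) : ℝ := psum q (l ++ l.take 1)

@[simp] lemma psum_nil : psum q ([] : List α) = 0 := rfl
@[simp] lemma psum_single (a : α) : psum q [a] = 0 := rfl
@[simp] lemma psum_cons_cons (a b : α) (l : List α) :
    psum q (a :: b :: l) = q a b + psum q (b :: l) := rfl

lemma psum_cons (a : α) (L : List α) (h : L ≠ []) :
    psum q (a :: L) = q a (L.head h) + psum q L := by
  cases L with
  | nil => exact absurd rfl h
  | cons b t => rfl

lemma psum_surg (l1 : List α) (w x v : α) (l2 : List α) :
    psum q (l1 ++ w :: x :: v :: l2) = psum q (l1 ++ w :: v :: l2) + q w x + q x v - q w v := by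
  induction l1 with
  | nil => simp only [nil_append, psum_cons_cons]; ring
  | cons a l1 ih =>
    have h1 : (l1 ++ w :: x :: v :: l2) ≠ [] := by simp
    have h2 : (l1 ++ w :: v :: l2) ≠ [] := by simp
    rw [cons_append, psum_cons q _ _ h1, cons_append, psum_cons q _ _ h2, ih]
    have hh : (l1 ++ w :: x :: v :: l2).head h1 = (l1 ++ w :: v :: l2).head h2 := by
      cases l1 <;> simp
    rw [hh]; ring

lemma csum_surg (l1 : List α) (w x v : α) (l2 : List α) :
    csum q (l1 ++ w :: x :: v :: l2) = csum q (l1 ++ w :: v :: l2) + q w x + q x v - q w v := by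
  unfold csum
  have ht : (l1 ++ w :: x :: v :: l2).take 1 = (l1 ++ w :: v :: l2).take 1 := by
    cases l1 <;> simp
  rw [ht]
  generalize (l1 ++ w :: v :: l2).take 1 = s
  have e1 : (l1 ++ w :: x :: v :: l2) ++ s = l1 ++ w :: x :: v :: (l2 ++ s) := by simp
  have e2 : (l1 ++ w :: v :: l2) ++ s = l1 ++ w :: v :: (l2 ++ s) := by simp
  rw [e1, e2, psum_surg]

lemma csum_surg_end (l2 : List α) (v w x : α) :
    csum q (v :: l2 ++ [w, x]) = csum q (v :: l2 ++ [w]) + q w x + q x v - q w v := by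
  unfold csum
  have e1 : (v :: l2 ++ [w, x]) ++ (v :: l2 ++ [w, x]).take 1
      = (v :: l2) ++ w :: x :: v :: [] := by simp
  have e2 : (v :: l2 ++ [w]) ++ (v :: l2 ++ [w]).take 1
      = (v :: l2) ++ w :: v :: [] := by simp
  rw [e1, e2, psum_surg]

lemma psum_concat (L : List α) (h : L ≠ []) (a : α) :
    psum q (L ++ [a]) = psum q L + q (L.getLast h) a := by
  induction L with
  | nil => exact absurd rfl h
  | cons x t ih =>
    cases t with
    | nil => simp [psum]
    | cons y t' =>
      have hne : (y :: t') ≠ [] := by simp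
      rw [cons_append, psum_cons q x _ (by simp : (y :: t') ++ [a] ≠ []), ih hne,
        psum_cons_cons, List.getLast_cons hne]
      have hh : ((y :: t') ++ [a]).head (by simp) = y := rfl
      rw [hh]; ring

lemma psum_concat_two (L : List α) (x y : α) :
    psum q (L ++ [x, y]) = psum q (L ++ [x]) + q x y := by
  have : L ++ [x, y] = (L ++ [x]) ++ [y] := by simp
  rw [this, psum_concat q (L ++ [x]) (by simp) y]
  congr 1
  simp

lemma csum_rotate_one (l : List α) : csum q (l.rotate 1) = csum q l := by
  cases l with
  | nil => rfl
  | cons a t =>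
    rw [show (a :: t).rotate 1 = t ++ [a] by
      simpa using List.rotate_cons_succ t a 0]
    cases t with
    | nil => rfl
    | cons b t' =>
      unfold csum
      have e1 : ((b :: t') ++ [a]) ++ (((b :: t') ++ [a]).take 1) = (b :: t') ++ [a, b] := by simp
      have e2 : (a :: b :: t') ++ ((a :: b :: t').take 1) = a :: ((b :: t') ++ [a]) := by simp
      rw [e1, e2, psum_concat_two, psum_cons q a ((b :: t') ++ [a]) (by simp)]
      have hh : ((b :: t') ++ [a]).head (by simp) = b := rfl
      rw [hh]
      ring

lemma csum_rotate (l : List α) (n : ℕ) : csum q (l.rotate n) = csum q l := by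
  induction n with
  | zero => rw [List.rotate_zero]
  | succ n ih =>
    have : l.rotate (n + 1) = (l.rotate n).rotate 1 := by rw [List.rotate_rotate]
    rw [this, csum_rotate_one, ih]

lemma psum_map {β : Type*} (f : β → α) : ∀ (l : List β),
    psum q (l.map f) = psum (fun a b => q (f a) (f b)) l
  | [] => rfl
  | [_] => rfl
  | a :: b :: t => by
    simp only [List.map_cons, psum_cons_cons]
    rw [show (f b :: List.map f t) = List.map f (b :: t) by simp, psum_map f (b :: t)]

lemma csum_map {β : Type*} (f : β → α) (l : List β) :
    csum q (l.map f) = csum (fun a b => q (f a) (f b)) l := by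
  unfold csum
  rw [← List.map_take, ← List.map_append, psum_map]

lemma crossPath {P : α → Prop} (l : List α) : ∀ (hh : l ≠ []) (_ : P (l.head hh)) (b : α)
    (_ : b ∈ l) (_ : ¬ P b),
    ∃ l1 w v l2, l = l1 ++ w :: v :: l2 ∧ P w ∧ ¬ P v := by
  induction l with
  | nil => intro hh; exact absurd rfl hh
  | cons x rest ih =>
    intro hh hhd b hb hnb
    simp only [List.head_cons] at hhd
    have hbr : b ∈ rest := by
      rcases List.mem_cons.mp hb with h | h
      · exact absurd (h ▸ hhd) hnb
      · exact h
    have hrne : rest ≠ [] := List.ne_nil_of_mem hbr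
    by_cases hy : P (rest.head hrne)
    · obtain ⟨l1, w, v, l2, heq, hw, hv⟩ := ih hrne hy b hbr hnb
      exact ⟨x :: l1, w, v, l2, by rw [heq, cons_append], hw, hv⟩
    · obtain ⟨y, t, rfl⟩ : ∃ y t, rest = y :: t := by
        cases rest with
        | nil => exact absurd rfl hrne
        | cons y t => exact ⟨y, t, rfl⟩
      exact ⟨[], x, y, t, rfl, hhd, by simpa using hy⟩

lemma pathBound (hu : ∀ a b c, q a c ≤ max (q a b) (q b c))
    (l : List α) : ∀ (x z : α), z ∈ x :: l → z = x ∨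
      ∃ l1 w v l2, x :: l = l1 ++ w :: v :: l2 ∧ q x z ≤ q w v := by
  induction l with
  | nil => intro x z hz; left; simpa using hz
  | cons y l' ih =>
    intro x z hz
    rcases List.mem_cons.mp hz with h | h
    · left; exact h
    · right
      rcases ih y z h with rfl | ⟨l1, w, v, l2, heq, hle⟩
      · exact ⟨[], x, z, l', rfl, le_refl _⟩
      · rcases le_max_iff.mp (hu x y z) with h1 | h1
        · exact ⟨[], x, y, l', rfl, h1⟩
        · exact ⟨x :: l1, w, v, l2, by rw [heq, cons_append], h1.trans hle⟩

lemma zip_con (t : List α) : ∀ (x a : α), (List.zipWith q (x :: t) (t ++ [a])).sum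
    = psum q (x :: t) + q ((x :: t).getLast (by simp)) a := by
  induction t with
  | nil => intro x a; simp [psum]
  | cons y t' ih =>
    intro x a
    rw [show (y :: t') ++ [a] = y :: (t' ++ [a]) by simp, List.zipWith_cons_cons,
      List.sum_cons, ih y a, psum_cons_cons, List.getLast_cons (by simp : (y :: t') ≠ [])]
    ring

lemma zip_csum (l : List α) : (List.zipWith q l (l.rotate 1)).sum = csum q l := by
  cases l with
  | nil => rfl
  | cons a t =>
    rw [show (a :: t).rotate 1 = t ++ [a] by simpa using List.rotate_cons_succ t a 0, zip_con]
    unfold csum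
    rw [show (a :: t).take 1 = [a] by simp, psum_concat q (a :: t) (by simp) a]

section FinPart
variable {N : ℕ}

def pfx (N n : ℕ) : Finset (Fin N) := Finset.univ.filter (fun i => i.1 < n)

lemma mem_pfx {n : ℕ} {i : Fin N} : i ∈ pfx N n ↔ i.1 < n := by simp [pfx]

lemma pfx_image {n : ℕ} (hn : n ≤ N) :
    pfx N n = (Finset.univ : Finset (Fin n)).image (Fin.castLE hn) := by
  ext i
  simp only [mem_pfx, Finset.mem_image, Finset.mem_univ, true_and]
  constructor
  · intro h; exact ⟨⟨i.1, h⟩, rfl⟩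
  · rintro ⟨a, rfl⟩; exact a.2

lemma card_pfx {n : ℕ} (hn : n ≤ N) : (pfx N n).card = n := by
  rw [pfx_image hn, Finset.card_image_of_injective _ (Fin.castLE_injective hn),
    Finset.card_univ, Fintype.card_fin]

lemma pfx_insert {c : ℕ} (hc : c < N) :
    insert (⟨c, hc⟩ : Fin N) (pfx N c) = pfx N (c+1) := by
  ext i
  simp only [Finset.mem_insert, mem_pfx, Fin.ext_iff]
  omega

lemma pfx_mono {c d : ℕ} (h : c ≤ d) : pfx N c ⊆ pfx N d := by
  intro i hi; rw [mem_pfx] at *; omega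

def Eset (r : Fin N → Fin N → ℝ) (n : ℕ) (hn : n ≤ N) : Set ℝ :=
  { x : ℝ | ∃ σ : Equiv.Perm (Fin n), σ.IsCycle ∧ σ.support = Finset.univ ∧
      x = ∑ i : Fin n, r (Fin.castLE hn i) (Fin.castLE hn (σ i)) }

lemma ell_eq (r : Fin N → Fin N → ℝ) {n : ℕ} (h2 : 2 ≤ n) (hn : n ≤ N) :
    ell r n = (1/2) * sInf (Eset r n hn) := by
  rw [ell, dif_pos (⟨h2, hn⟩ : 2 ≤ n ∧ n ≤ N)]
  rfl

lemma ell_small (r : Fin N → Fin N → ℝ) {n : ℕ} (h2 : n < 2) : ell r n = 0 := by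
  rw [ell, dif_neg (by omega)]

lemma Eset_image (r : Fin N → Fin N → ℝ) {n : ℕ} (hn : n ≤ N) : Eset r n hn =
    (fun σ : Equiv.Perm (Fin n) =>
        ∑ i : Fin n, r (Fin.castLE hn i) (Fin.castLE hn (σ i))) ''
      {σ : Equiv.Perm (Fin n) | σ.IsCycle ∧ σ.support = Finset.univ} := by
  ext x
  constructor
  · rintro ⟨σ, h1, h2, rfl⟩; exact ⟨σ, ⟨h1, h2⟩, rfl⟩
  · rintro ⟨σ, ⟨h1, h2⟩, rfl⟩; exact ⟨σ, h1, h2, rfl⟩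

lemma Eset_finite (r : Fin N → Fin N → ℝ) {n : ℕ} (hn : n ≤ N) : (Eset r n hn).Finite := by
  rw [Eset_image]
  exact (Set.toFinite _).image _

lemma Eset_nonempty (r : Fin N → Fin N → ℝ) {n : ℕ} (h2 : 2 ≤ n) (hn : n ≤ N) :
    (Eset r n hn).Nonempty :=
  ⟨_, finRotate n, isCycle_finRotate_of_le h2,
    support_finRotate_of_le h2, rfl⟩

lemma Eset_inf_mem (r : Fin N → Fin N → ℝ) {n : ℕ} (h2 : 2 ≤ n) (hn : n ≤ N) :
    sInf (Eset r n hn) ∈ Eset r n hn :=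
  (Eset_nonempty r h2 hn).csInf_mem (Eset_finite r hn)

lemma Eset_inf_le (r : Fin N → Fin N → ℝ) {n : ℕ} (hn : n ≤ N) {x : ℝ}
    (hx : x ∈ Eset r n hn) : sInf (Eset r n hn) ≤ x :=
  csInf_le (Eset_finite r hn).bddBelow hx

lemma list_toFinset_map {α β : Type*} [DecidableEq α] [DecidableEq β] (f : α → β)
    (l : List α) : (l.map f).toFinset = l.toFinset.image f := by
  ext b
  simp [List.mem_toFinset, List.mem_map, Finset.mem_image]

lemma sum_eq_csum {n : ℕ} (q : Fin n → Fin n → ℝ) (l : List (Fin n))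
    (hnd : l.Nodup) (hts : l.toFinset = Finset.univ) :
    ∑ i : Fin n, q i (l.formPerm i) = csum q l := by
  have h1 : ∑ i : Fin n, q i (l.formPerm i)
      = (l.map (fun x => q x (l.formPerm x))).sum := by
    rw [← List.sum_toFinset _ hnd, hts]
  rw [h1]
  have hmap : l.map (fun x => q x (l.formPerm x)) = List.zipWith q l (l.rotate 1) := by
    apply List.ext_getElem
    · simp
    · intro i hi1 hi2
      simp only [List.getElem_map, List.getElem_zipWith, List.getElem_rotate]
      rw [List.formPerm_apply_getElem _ hnd]
  rw [hmap, zip_csum]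

lemma Eset_eq_lists (r : Fin N → Fin N → ℝ) {n : ℕ} (h2 : 2 ≤ n) (hn : n ≤ N) :
    Eset r n hn = csum r '' { l : List (Fin N) | l.Nodup ∧ l.toFinset = pfx N n } := by
  ext x
  constructor
  · rintro ⟨σ, hcyc, hsupp, rfl⟩
    set x₀ : Fin n := ⟨0, by omega⟩ with hx₀def
    have hx₀ : σ x₀ ≠ x₀ :=
      Equiv.Perm.mem_support.mp (hsupp ▸ Finset.mem_univ x₀)
    set l₀ := σ.toList x₀ with hl₀
    have hnd : l₀.Nodup := Equiv.Perm.nodup_toList σ x₀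
    have hmem : ∀ y, y ∈ l₀ := by
      intro y
      rw [hl₀, Equiv.Perm.mem_toList_iff]
      exact ⟨hcyc.sameCycle hx₀ (Equiv.Perm.mem_support.mp (hsupp ▸ Finset.mem_univ y)),
        Equiv.Perm.mem_support.mpr hx₀⟩
    have hts : l₀.toFinset = Finset.univ :=
      Finset.eq_univ_iff_forall.mpr (fun y => List.mem_toFinset.mpr (hmem y))
    have hform : l₀.formPerm = σ := by
      rw [hl₀, Equiv.Perm.formPerm_toList, hcyc.cycleOf_eq hx₀]
    refine ⟨l₀.map (Fin.castLE hn), ⟨hnd.map (Fin.castLE_injective hn), ?_⟩, ?_⟩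
    · rw [list_toFinset_map, hts, ← pfx_image hn]
    · rw [csum_map, ← sum_eq_csum _ l₀ hnd hts, hform]
  · rintro ⟨l, ⟨hnd, hts⟩, rfl⟩
    have hlt : ∀ x ∈ l, x.1 < n := fun x hx => mem_pfx.mp (hts ▸ List.mem_toFinset.mpr hx)
    set l₀ : List (Fin n) := l.pmap (fun x (hx : x.1 < n) => (⟨x.1, hx⟩ : Fin n)) hlt with hl₀
    have hmapback : l₀.map (Fin.castLE hn) = l := by
      rw [hl₀, List.map_pmap]
      rw [show ∀ (L : List (Fin N)) (H : ∀ x ∈ L, x.1 < n), L.pmap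
          (fun x (hx : x.1 < n) => Fin.castLE hn (⟨x.1, hx⟩ : Fin n)) H = L from ?_]
      intro L
      induction L with
      | nil => intro H; rfl
      | cons a L ih => intro H; rw [List.pmap, ih]; rfl
    have hnd₀ : l₀.Nodup := by
      have := hmapback ▸ hnd
      exact this.of_map _
    have hlen : l₀.length = n := by
      have h1 : l.length = n := by
        rw [← List.toFinset_card_of_nodup hnd, hts, card_pfx hn]
      rw [hl₀, List.length_pmap, h1]
    have hts₀ : l₀.toFinset = Finset.univ := by
      apply Finset.eq_univ_of_card
      rw [List.toFinset_card_of_nodup hnd₀, hlen, Fintype.card_fin]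
    refine ⟨l₀.formPerm, List.isCycle_formPerm hnd₀ (by omega), ?_, ?_⟩
    · rw [List.support_formPerm_of_nodup l₀ hnd₀, hts₀]
      intro y hy
      rw [hy] at hlen
      simp at hlen
      omega
    · rw [← hmapback, csum_map]
      exact (sum_eq_csum _ l₀ hnd₀ hts₀).symm

end FinPart

section Quantities
variable {N : ℕ}

lemma pfx_nonempty {N c : ℕ} (h1 : 1 ≤ c) (hc : c ≤ N) : (pfx N c).Nonempty :=
  ⟨⟨0, by omega⟩, mem_pfx.mpr h1⟩

noncomputable def mmF (r : Fin N → Fin N → ℝ) (c : ℕ) : ℝ :=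
  if h : 1 ≤ c ∧ c < N then
    ((pfx N c).image (fun x => r x ⟨c, h.2⟩)).min'
      ((pfx_nonempty h.1 (le_of_lt h.2)).image _)
  else 0

noncomputable def DDF (r : Fin N → Fin N → ℝ) (c : ℕ) : ℝ :=
  if h : 1 ≤ c ∧ c ≤ N then
    (((pfx N c) ×ˢ (pfx N c)).image (fun p => r p.1 p.2)).max'
      (((pfx_nonempty h.1 h.2).product (pfx_nonempty h.1 h.2)).image _)
  else 0

lemma mmF_le (r : Fin N → Fin N → ℝ) {c : ℕ} (h1 : 1 ≤ c) (hc : c < N)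
    {x : Fin N} (hx : x ∈ pfx N c) : mmF r c ≤ r x ⟨c, hc⟩ := by
  rw [mmF, dif_pos ⟨h1, hc⟩]
  exact Finset.min'_le _ _ (Finset.mem_image_of_mem _ hx)

lemma exists_mmF (r : Fin N → Fin N → ℝ) {c : ℕ} (h1 : 1 ≤ c) (hc : c < N) :
    ∃ x ∈ pfx N c, r x ⟨c, hc⟩ = mmF r c := by
  rw [mmF, dif_pos ⟨h1, hc⟩]
  have := Finset.min'_mem ((pfx N c).image (fun x => r x ⟨c, hc⟩))
    ((pfx_nonempty h1 hc.le).image _)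
  rw [Finset.mem_image] at this
  obtain ⟨x, hx, he⟩ := this
  exact ⟨x, hx, he⟩

lemma le_DDF (r : Fin N → Fin N → ℝ) {c : ℕ} (h1 : 1 ≤ c) (hc : c ≤ N)
    {x y : Fin N} (hx : x ∈ pfx N c) (hy : y ∈ pfx N c) : r x y ≤ DDF r c := by
  rw [DDF, dif_pos ⟨h1, hc⟩]
  apply Finset.le_max'
  rw [Finset.mem_image]
  exact ⟨(x, y), Finset.mem_product.mpr ⟨hx, hy⟩, rfl⟩

lemma exists_DDF (r : Fin N → Fin N → ℝ) {c : ℕ} (h1 : 1 ≤ c) (hc : c ≤ N) :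
    ∃ x ∈ pfx N c, ∃ y ∈ pfx N c, r x y = DDF r c := by
  rw [DDF, dif_pos ⟨h1, hc⟩]
  have := Finset.max'_mem (((pfx N c) ×ˢ (pfx N c)).image (fun p => r p.1 p.2))
    (((pfx_nonempty h1 hc).product (pfx_nonempty h1 hc)).image _)
  rw [Finset.mem_image] at this
  obtain ⟨⟨x, y⟩, hxy, he⟩ := this
  rw [Finset.mem_product] at hxy
  exact ⟨x, hxy.1, y, hxy.2, he⟩

lemma mmF_nonneg {r : Fin N → Fin N → ℝ} (hu : IsUltramat r) {c : ℕ}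
    (h1 : 1 ≤ c) (hc : c < N) : 0 ≤ mmF r c := by
  obtain ⟨x, hx, he⟩ := exists_mmF r h1 hc
  rw [← he]; exact hu.1 _ _

lemma DDF_nonneg {r : Fin N → Fin N → ℝ} (hu : IsUltramat r) {c : ℕ}
    (h1 : 1 ≤ c) (hc : c ≤ N) : 0 ≤ DDF r c := by
  obtain ⟨x, hx, y, hy, he⟩ := exists_DDF r h1 hc
  rw [← he]; exact hu.1 _ _

lemma depth_eq (r : Fin N → Fin N → ℝ) {n : ℕ} (h1 : 1 ≤ n) (hn : n ≤ N) :
    2 * depthFn r n = DDF r n := by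
  rw [depthFn, dif_pos (⟨h1, hn⟩ : 1 ≤ n ∧ n ≤ N)]
  have hs : sSup { x : ℝ | ∃ i j : Fin n, x = r (Fin.castLE hn i) (Fin.castLE hn j) }
      = DDF r n := by
    apply IsGreatest.csSup_eq
    constructor
    · obtain ⟨x, hx, y, hy, he⟩ := exists_DDF r h1 hn
      refine ⟨⟨x.1, mem_pfx.mp hx⟩, ⟨y.1, mem_pfx.mp hy⟩, ?_⟩
      rw [← he]
      rfl
    · rintro x ⟨i, j, rfl⟩
      exact le_DDF r h1 hn (mem_pfx.mpr i.2) (mem_pfx.mpr j.2)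
  rw [hs]; ring

lemma DDF_one {r : Fin N → Fin N → ℝ} (hu : IsUltramat r) (hN : 1 ≤ N) :
    DDF r 1 = 0 := by
  rw [DDF, dif_pos ⟨le_refl 1, hN⟩]
  apply _root_.le_antisymm
  · apply Finset.max'_le
    intro y hy
    rw [Finset.mem_image] at hy
    obtain ⟨⟨x, z⟩, hxz, rfl⟩ := hy
    simp only [Finset.mem_product, mem_pfx] at hxz
    have : x = z := Fin.ext (by omega)
    rw [this, hu.2.2.1]
  · apply Finset.le_max'
    rw [Finset.mem_image]
    refine ⟨(⟨0, by omega⟩, ⟨0, by omega⟩), ?_, hu.2.2.1 _⟩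
    exact Finset.mem_product.mpr ⟨mem_pfx.mpr (by norm_num), mem_pfx.mpr (by norm_num)⟩

/-- the two larger sides of an ultrametric triangle are equal -/
lemma ultra_eq {r : Fin N → Fin N → ℝ} (hu : IsUltramat r) {a b c : Fin N}
    (h : r a b < r b c) : r a c = r b c := by
  have h1 := hu.2.2.2 a b c
  rw [max_eq_right h.le] at h1
  have h2 := hu.2.2.2 b a c
  rw [hu.2.1 b a] at h2
  apply _root_.le_antisymm h1
  rcases le_or_gt (r b c) (r a c) with h3 | h3
  · exact h3
  · exact absurd (lt_of_le_of_lt h2 (max_lt h h3)) (lt_irrefl _)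

lemma DD_succ {r : Fin N → Fin N → ℝ} (hu : IsUltramat r) {c : ℕ}
    (h1 : 1 ≤ c) (hc : c < N) :
    DDF r (c+1) = max (DDF r c) (mmF r c) := by
  obtain ⟨k, hk, hkm⟩ := exists_mmF r h1 hc
  set t : Fin N := ⟨c, hc⟩ with ht
  apply _root_.le_antisymm
  · rw [DDF, dif_pos (⟨by omega, by omega⟩ : 1 ≤ c + 1 ∧ c + 1 ≤ N)]
    apply Finset.max'_le
    intro y hy
    rw [Finset.mem_image] at hy
    obtain ⟨⟨x, z⟩, hxz, rfl⟩ := hy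
    simp only [Finset.mem_product, mem_pfx] at hxz
    have hx := hxz.1
    have hz := hxz.2
    -- bound r x z when either may equal t
    have key : ∀ x : Fin N, x.1 < c → r x t ≤ max (DDF r c) (mmF r c) := by
      intro x hxc
      calc r x t ≤ max (r x k) (r k t) := hu.2.2.2 x k t
        _ ≤ max (DDF r c) (mmF r c) := by
            apply max_le_max
            · exact le_DDF r h1 hc.le (mem_pfx.mpr hxc) hk
            · rw [hkm]
    rcases Nat.lt_or_ge x.1 c with hxc | hxc <;> rcases Nat.lt_or_ge z.1 c with hzc | hzc
    · exact le_trans (le_DDF r h1 hc.le (mem_pfx.mpr hxc) (mem_pfx.mpr hzc)) (le_max_left _ _)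
    · have : z = t := Fin.ext (show z.1 = c by omega)
      rw [this]; exact key x hxc
    · have : x = t := Fin.ext (show x.1 = c by omega)
      rw [this, hu.2.1]; exact key z hzc
    · have hx' : x = t := Fin.ext (show x.1 = c by omega)
      have hz' : z = t := Fin.ext (show z.1 = c by omega)
      rw [hx', hz', hu.2.2.1]
      exact le_trans (DDF_nonneg hu h1 hc.le) (le_max_left _ _)
  · apply max_le
    · obtain ⟨x, hx, y, hy, he⟩ := exists_DDF r h1 hc.le
      rw [← he]
      exact le_DDF r (by omega) (by omega) (pfx_mono (by omega) hx) (pfx_mono (by omega) hy)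
    · rw [← hkm]
      exact le_DDF r (by omega) (by omega) (pfx_mono (by omega) hk)
        (mem_pfx.mpr (show c < c + 1 by omega))

end Quantities

section MrecSec
variable {N : ℕ}

lemma exists_rot (r : Fin N → Fin N → ℝ) (l : List (Fin N)) (a : Fin N) (ha : a ∈ l) :
    ∃ rest, csum r (a :: rest) = csum r l ∧ (a :: rest).Perm l := by
  obtain ⟨l1, l2, rfl⟩ := List.append_of_mem ha
  have hrot : (l1 ++ a :: l2).rotate l1.length = a :: (l2 ++ l1) := by
    rw [List.rotate_eq_drop_append_take (by simp), List.drop_left, List.take_left]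
    simp
  refine ⟨l2 ++ l1, ?_, ?_⟩
  · rw [← hrot, csum_rotate]
  · calc a :: (l2 ++ l1) = (a :: l2) ++ l1 := by simp
      _ ~ l1 ++ (a :: l2) := List.perm_append_comm

lemma cost_ge {r : Fin N → Fin N → ℝ} (hu : IsUltramat r) {c : ℕ} (h1 : 1 ≤ c) (hc : c < N)
    {w v : Fin N} (hw : w ∈ pfx N c) (hv : v ∈ pfx N c) :
    max (mmF r c) (2 * mmF r c - DDF r c)
      ≤ r w ⟨c, hc⟩ + r ⟨c, hc⟩ v - r w v := by
  set t : Fin N := ⟨c, hc⟩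
  have h1w : mmF r c ≤ r w t := mmF_le r h1 hc hw
  have h1v : mmF r c ≤ r v t := mmF_le r h1 hc hv
  have hvt : r t v = r v t := hu.2.1 t v
  have hD : r w v ≤ DDF r c := le_DDF r h1 hc.le hw hv
  have hwv : r w v ≤ max (r w t) (r t v) := hu.2.2.2 w t v
  apply max_le
  · rcases max_cases (r w t) (r t v) with ⟨he, h'⟩ | ⟨he, h'⟩ <;> rw [he] at hwv
    · linarith
    · linarith
  · linarith

lemma Mrec {r : Fin N → Fin N → ℝ} (hu : IsUltramat r) (c : ℕ) (h1 : 1 ≤ c) (hc : c < N) :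
    2 * ell r (c+1) = 2 * ell r c
      + max (mmF r c) (2 * mmF r c - DDF r c) := by
  rcases eq_or_lt_of_le h1 with hc1 | hc2
  · -- base case c = 1
    obtain rfl : c = 1 := hc1.symm
    have hN2 : (2:ℕ) ≤ N := hc
    have hEll1 : ell r 1 = 0 := ell_small r (by omega)
    rw [ell_eq r (le_refl 2) hN2, hEll1]
    set p0 : Fin N := ⟨0, by omega⟩ with hp0
    set p1 : Fin N := ⟨1, by omega⟩ with hp1
    have hE : Eset r 2 hN2 = {r p0 p1 + r p1 p0} := by
      ext x
      simp only [Set.mem_singleton_iff]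
      constructor
      · rintro ⟨σ, hcyc, hsupp, rfl⟩
        have h0 : σ 0 ≠ 0 := Equiv.Perm.mem_support.mp (hsupp ▸ Finset.mem_univ 0)
        have h1' : σ 1 ≠ 1 := Equiv.Perm.mem_support.mp (hsupp ▸ Finset.mem_univ 1)
        have e0 : σ 0 = 1 := by
          have hv := (σ 0).2
          have h0' : (σ 0).1 ≠ 0 := fun h => h0 (Fin.ext (by simpa using h))
          exact Fin.ext (show (σ 0).1 = 1 by omega)
        have e1 : σ 1 = 0 := by
          have hv := (σ 1).2
          have h1'' : (σ 1).1 ≠ 1 := fun h => h1' (Fin.ext (by simpa using h))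
          exact Fin.ext (show (σ 1).1 = 0 by omega)
        rw [Fin.sum_univ_two, e0, e1]
        rfl
      · intro hx
        refine ⟨Equiv.swap 0 1, Equiv.Perm.isCycle_swap (by decide), ?_, ?_⟩
        · rw [Equiv.Perm.support_swap (by decide)]
          decide
        · rw [Fin.sum_univ_two, Equiv.swap_apply_left, Equiv.swap_apply_right]
          exact hx
    rw [hE, csInf_singleton]
    have hmm : mmF r 1 = r p0 p1 := by
      rw [mmF, dif_pos (⟨le_refl 1, by omega⟩ : 1 ≤ 1 ∧ 1 < N)]
      apply _root_.le_antisymm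
      · apply Finset.min'_le
        rw [Finset.mem_image]
        exact ⟨p0, mem_pfx.mpr (show (0:ℕ) < 1 by norm_num), rfl⟩
      · apply Finset.le_min'
        intro y hy
        rw [Finset.mem_image] at hy
        obtain ⟨x, hx, rfl⟩ := hy
        have hxp : x = p0 := Fin.ext (show x.1 = 0 by have := mem_pfx.mp hx; omega)
        rw [hxp]
    have hDD1 : DDF r 1 = 0 := DDF_one hu (by omega)
    rw [hmm, hDD1, hu.2.1 p1 p0]
    have hmn : 0 ≤ r p0 p1 := hu.1 _ _
    rw [max_eq_right (by linarith)]
    ring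
  · -- main case 2 ≤ c
    have h2c : 2 ≤ c := hc2
    have hcN : c ≤ N := hc.le
    have hc1N : c + 1 ≤ N := hc
    set t : Fin N := ⟨c, hc⟩ with htdef
    set m := mmF r c with hmdef
    set D := DDF r c with hDdef
    rw [ell_eq r h2c hcN, ell_eq r (by omega) hc1N]
    have goal_eq : sInf (Eset r (c+1) hc1N) = sInf (Eset r c hcN) + max m (2*m - D) := by
      apply _root_.le_antisymm
      · -- upper bound by insertion surgery
        have hmem : sInf (Eset r c hcN) ∈ csum r '' {l : List (Fin N) | l.Nodup ∧ l.toFinset = pfx N c} := by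
          rw [← Eset_eq_lists r h2c hcN]
          exact Eset_inf_mem r h2c hcN
        obtain ⟨l, ⟨hnd, hts⟩, hsum⟩ := hmem
        obtain ⟨kst, hkst, hkm⟩ := exists_mmF r (by omega) hc
        -- common insertion machinery, parametrized by a split of a rotation of l
        have main : ∀ (rest : List (Fin N)) (a : Fin N), csum r (a :: rest) = csum r l →
            (a :: rest).Perm l →
            ∀ (l1 : List (Fin N)) (w v : Fin N) (l2 : List (Fin N)),
            a :: rest = l1 ++ w :: v :: l2 →
            sInf (Eset r (c+1) hc1N) ≤ csum r l + (r w t + r t v - r w v) := by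
          intro rest a hcs hperm l1 w v l2 heq
          have hndrot : (a :: rest).Nodup := hperm.nodup_iff.mpr hnd
          have htsrot : (a :: rest).toFinset = pfx N c :=
            (List.toFinset_eq_of_perm _ _ hperm).trans hts
          set lnew := l1 ++ w :: t :: v :: l2 with hlnew
          have hcost : csum r lnew = csum r (a :: rest) + r w t + r t v - r w v := by
            rw [hlnew, heq, csum_surg]
          have hperm2 : lnew.Perm (t :: (a :: rest)) := by
            rw [hlnew, heq]
            calc l1 ++ w :: t :: v :: l2 = (l1 ++ [w]) ++ t :: (v :: l2) := by simp
              _ ~ t :: ((l1 ++ [w]) ++ (v :: l2)) := List.perm_middle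
              _ = t :: (l1 ++ w :: v :: l2) := by simp
          have htnotin : t ∉ (a :: rest) := by
            intro h
            have h2 := mem_pfx.mp (htsrot ▸ List.mem_toFinset.mpr h)
            have : c < c := by simpa [htdef] using h2
            omega
          have hndnew : lnew.Nodup :=
            (hperm2.nodup_iff).mpr (List.nodup_cons.mpr ⟨htnotin, hndrot⟩)
          have htsnew : lnew.toFinset = pfx N (c+1) := by
            rw [List.toFinset_eq_of_perm _ _ hperm2, List.toFinset_cons, htsrot, pfx_insert hc]
          have hmemE : csum r lnew ∈ Eset r (c+1) hc1N := by
            rw [Eset_eq_lists r (by omega) hc1N]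
            exact ⟨lnew, ⟨hndnew, htsnew⟩, rfl⟩
          calc sInf (Eset r (c+1) hc1N) ≤ csum r lnew := Eset_inf_le r hc1N hmemE
            _ = csum r l + (r w t + r t v - r w v) := by rw [hcost, hcs]; ring
        by_cases hA : ∃ x ∈ pfx N c, m < r x t
        · -- case A : insertion at a boundary pair costs exactly m
          obtain ⟨x0, hx0, hx0m⟩ := hA
          have hkl : kst ∈ l := List.mem_toFinset.mp (hts ▸ hkst)
          obtain ⟨rest, hcs, hperm⟩ := exists_rot r l kst hkl
          have htsrot : (kst :: rest).toFinset = pfx N c :=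
            (List.toFinset_eq_of_perm _ _ hperm).trans hts
          have hx0l : x0 ∈ kst :: rest := List.mem_toFinset.mp (htsrot ▸ hx0)
          obtain ⟨l1, w, v, l2, heq, hPw, hPv⟩ := crossPath (P := fun y => r y t ≤ m)
            (kst :: rest) (by simp) (by simpa using hkm.le) x0 hx0l (not_le.mpr hx0m)
          have hw_mem : w ∈ pfx N c := by
            rw [← htsrot]
            exact List.mem_toFinset.mpr (by rw [heq]; simp)
          have hrwt : r w t = m := _root_.le_antisymm hPw (mmF_le r (by omega) hc hw_mem)
          have hrtv : r t v = r w v := by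
            have hxlt : r w t < r t v := by
              rw [hrwt, hu.2.1 t v]
              exact not_le.mp hPv
            exact (ultra_eq hu hxlt).symm
          have := main rest kst hcs hperm l1 w v l2 heq
          calc sInf (Eset r (c+1) hc1N) ≤ csum r l + (r w t + r t v - r w v) := this
            _ = csum r l + m := by rw [hrwt, hrtv]; ring
            _ = sInf (Eset r c hcN) + m := by rw [hsum]
            _ ≤ sInf (Eset r c hcN) + max m (2*m - D) :=
                add_le_add_right (le_max_left _ _) _
        · -- case B : all new distances are m ; insert at a diameter edge
          push_neg at hA
          obtain ⟨u, hu_mem, z, hz_mem, hDuz⟩ := exists_DDF r (by omega) hcN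
          have hul : u ∈ l := List.mem_toFinset.mp (hts ▸ hu_mem)
          obtain ⟨rest, hcs, hperm⟩ := exists_rot r l u hul
          have htsrot : (u :: rest).toFinset = pfx N c :=
            (List.toFinset_eq_of_perm _ _ hperm).trans hts
          have hzl : z ∈ u :: rest := List.mem_toFinset.mp (htsrot ▸ hz_mem)
          have hsplit : ∃ l1 w v l2, u :: rest = l1 ++ w :: v :: l2 ∧ D ≤ r w v := by
            rcases pathBound r hu.2.2.2 rest u z hzl with hzu | ⟨l1, w, v, l2, heq, hle⟩
            · have hD0 : D = 0 := by rw [hDdef, ← hDuz, hzu, hu.2.2.1]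
              have hlen : (u :: rest).length = c := by
                rw [hperm.length_eq, ← List.toFinset_card_of_nodup hnd, hts, card_pfx hcN]
              obtain ⟨v, rest2, hre⟩ : ∃ v rest2, rest = v :: rest2 := by
                cases rest with
                | nil => simp at hlen; omega
                | cons a b => exact ⟨a, b, rfl⟩
              exact ⟨[], u, v, rest2, by rw [hre]; rfl, by rw [hD0]; exact hu.1 _ _⟩
            · refine ⟨l1, w, v, l2, heq, ?_⟩
              rw [hDdef, ← hDuz]
              exact hle
          obtain ⟨l1, w, v, l2, heq, hDwv⟩ := hsplit
          have hw_mem : w ∈ pfx N c := by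
            rw [← htsrot]
            exact List.mem_toFinset.mpr (by rw [heq]; simp)
          have hv_mem : v ∈ pfx N c := by
            rw [← htsrot]
            exact List.mem_toFinset.mpr (by rw [heq]; simp)
          have hwt := hA w hw_mem
          have hvt : r t v ≤ m := by rw [hu.2.1 t v]; exact hA v hv_mem
          have := main rest u hcs hperm l1 w v l2 heq
          calc sInf (Eset r (c+1) hc1N) ≤ csum r l + (r w t + r t v - r w v) := this
            _ ≤ csum r l + (2*m - D) := by
                apply add_le_add_right
                linarith
            _ = sInf (Eset r c hcN) + (2*m - D) := by rw [hsum]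
            _ ≤ sInf (Eset r c hcN) + max m (2*m - D) :=
                add_le_add_right (le_max_right _ _) _
      · -- lower bound by deletion surgery
        have hmem : sInf (Eset r (c+1) hc1N) ∈ csum r '' {l : List (Fin N) | l.Nodup ∧ l.toFinset = pfx N (c+1)} := by
          rw [← Eset_eq_lists r (by omega) hc1N]
          exact Eset_inf_mem r (by omega) hc1N
        obtain ⟨l, ⟨hnd, hts⟩, hsum⟩ := hmem
        have htl : t ∈ l :=
          List.mem_toFinset.mp (hts ▸ mem_pfx.mpr (show c < c + 1 by omega))
        obtain ⟨rest, hcs, hperm⟩ := exists_rot r l t htl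
        have hndrot : (t :: rest).Nodup := hperm.nodup_iff.mpr hnd
        have htsrot : (t :: rest).toFinset = pfx N (c+1) :=
          (List.toFinset_eq_of_perm _ _ hperm).trans hts
        have htnr : t ∉ rest := (List.nodup_cons.mp hndrot).1
        have hndrest : rest.Nodup := (List.nodup_cons.mp hndrot).2
        have htsrest : rest.toFinset = pfx N c := by
          ext i
          constructor
          · intro hi
            have hir : i ∈ rest := List.mem_toFinset.mp hi
            have hi1 : i ∈ pfx N (c+1) := htsrot ▸ List.mem_toFinset.mpr (List.mem_cons_of_mem t hir)
            have hine : i ≠ t := fun h => htnr (h ▸ hir)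
            rw [mem_pfx] at hi1 ⊢
            have : i.1 ≠ c := fun h => hine (Fin.ext (by simpa using h))
            omega
          · intro hi
            have h2 : i ∈ pfx N (c+1) := pfx_mono (by omega) hi
            rw [← htsrot, List.mem_toFinset] at h2
            rcases List.mem_cons.mp h2 with h | h
            · exfalso
              rw [mem_pfx] at hi
              rw [h] at hi
              have : c < c := by simpa [htdef] using hi
              omega
            · exact List.mem_toFinset.mpr h
        have hlenrest : rest.length = c := by
          rw [← List.toFinset_card_of_nodup hndrest, htsrest, card_pfx hcN]
        obtain ⟨v, rest2, rfl⟩ : ∃ v rest2, rest = v :: rest2 := by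
          cases rest with
          | nil => simp at hlenrest; omega
          | cons a b => exact ⟨a, b, rfl⟩
        obtain ⟨rest3, w, hre3⟩ : ∃ rest3 w, rest2 = rest3 ++ [w] := by
          rcases rest2.eq_nil_or_concat' with h | ⟨L, b, h⟩
          · exfalso
            rw [h] at hlenrest
            simp at hlenrest
            omega
          · exact ⟨L, b, h⟩
        have hrot : csum r ((v :: rest2) ++ [t]) = csum r (t :: v :: rest2) := by
          have he : (t :: (v :: rest2)).rotate 1 = (v :: rest2) ++ [t] := by
            simpa using List.rotate_cons_succ (v :: rest2) t 0
          have h3 := csum_rotate_one r (t :: (v :: rest2))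
          rw [he] at h3
          exact h3
        have hsurg : csum r ((v :: rest2) ++ [t])
            = csum r (v :: rest2) + r w t + r t v - r w v := by
          rw [hre3]
          have e1 : (v :: (rest3 ++ [w])) ++ [t] = v :: rest3 ++ [w, t] := by simp
          have e2 : v :: (rest3 ++ [w]) = v :: rest3 ++ [w] := by simp
          rw [e1, e2, csum_surg_end]
        have hmemrest : csum r (v :: rest2) ∈ Eset r c hcN := by
          rw [Eset_eq_lists r h2c hcN]
          exact ⟨v :: rest2, ⟨hndrest, htsrest⟩, rfl⟩
        have hgerest := Eset_inf_le r hcN hmemrest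
        have hw_mem : w ∈ pfx N c := by
          rw [← htsrest]
          exact List.mem_toFinset.mpr (by rw [hre3]; simp)
        have hv_mem : v ∈ pfx N c := by
          rw [← htsrest]
          exact List.mem_toFinset.mpr (by simp)
        have hcost := cost_ge hu (by omega) hc hw_mem hv_mem
        calc sInf (Eset r c hcN) + max m (2*m - D)
            ≤ csum r (v :: rest2) + (r w t + r t v - r w v) := add_le_add hgerest hcost
          _ = csum r (t :: v :: rest2) := by rw [← hrot, hsurg]; ring
          _ = csum r l := hcs
          _ = sInf (Eset r (c+1) hc1N) := hsum
    rw [goal_eq]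
    ring

end MrecSec

section NearestSec
variable {N : ℕ}

lemma nearest {r : Fin N → Fin N → ℝ} (hu : IsUltramat r) (hmin : LengthMinimal r) :
    ∀ b : ℕ, ∀ (hb : b + 1 < N), mmF r (b+1) = r ⟨b, by omega⟩ ⟨b+1, hb⟩ := by
  intro b
  induction b using Nat.strong_induction_on with
  | _ b ih =>
    intro hb
    have hbN : b < N := by omega
    set t : Fin N := ⟨b+1, hb⟩ with htdef
    have hprev : (⟨b, hbN⟩ : Fin N) ∈ pfx N (b+1) := mem_pfx.mpr (show b < b+1 by omega)
    have hle : mmF r (b+1) ≤ r ⟨b, hbN⟩ t := mmF_le r (by omega) hb hprev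
    apply _root_.le_antisymm hle
    by_contra hcon
    have hlt : mmF r (b+1) < r (⟨b, hbN⟩ : Fin N) t := not_le.mp hcon
    set m := mmF r (b+1) with hmdef
    -- the largest index j (point jF) with r x t = m
    have hAne : ((pfx N (b+1)).filter (fun x => r x t = m)).Nonempty := by
      obtain ⟨x, hx, he⟩ := exists_mmF r (by omega) hb
      exact ⟨x, Finset.mem_filter.mpr ⟨hx, he⟩⟩
    have hjA := Finset.max'_mem ((pfx N (b+1)).filter (fun x => r x t = m)) hAne
    rw [Finset.mem_filter] at hjA
    set jF := ((pfx N (b+1)).filter (fun x => r x t = m)).max' hAne with hjFdef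
    have hjmem : jF ∈ pfx N (b+1) := hjA.1
    have hjval : r jF t = m := hjA.2
    set j := jF.1 with hjdef
    have hjb1 : j < b + 1 := mem_pfx.mp hjmem
    have hjne : j ≠ b := by
      intro h
      have he : jF = ⟨b, hbN⟩ := Fin.ext (show jF.1 = b by omega)
      rw [he] at hjval
      rw [hjval] at hlt
      exact lt_irrefl _ hlt
    have hjb : j + 1 ≤ b := by omega
    have hj1N : j + 1 < N := by omega
    have hjN : j < N := by omega
    have hgt : ∀ x : Fin N, x ∈ pfx N (b+1) → j < x.1 → m < r x t := by
      intro x hx hjx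
      rcases lt_or_eq_of_le (mmF_le r (by omega) hb hx) with h | h
      · exact h
      · exfalso
        have hxA : x ∈ (pfx N (b+1)).filter (fun x => r x t = m) :=
          Finset.mem_filter.mpr ⟨hx, h.symm⟩
        have hxle : x ≤ jF := Finset.le_max' _ x hxA
        rw [Fin.le_def] at hxle
        omega
    have hIH : mmF r (j+1) = r ⟨j, by omega⟩ ⟨j+1, hj1N⟩ := ih j (by omega) hj1N
    have hIH' : mmF r (j+1) = r (⟨j, hjN⟩ : Fin N) (⟨j+1, hj1N⟩ : Fin N) := hIH
    have hC1 : m < mmF r (j+1) := by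
      rw [hIH']
      by_contra hcon2
      have hcon2' : r (⟨j, hjN⟩ : Fin N) (⟨j+1, hj1N⟩ : Fin N) ≤ m := not_lt.mp hcon2
      have h1 : (⟨j+1, hj1N⟩ : Fin N) ∈ pfx N (b+1) := mem_pfx.mpr (show j+1 < b+1 by omega)
      have h2 : m < r (⟨j+1, hj1N⟩ : Fin N) t := hgt _ h1 (show j < j+1 by omega)
      have h3 : r (⟨j+1, hj1N⟩ : Fin N) t
          ≤ max (r (⟨j+1, hj1N⟩ : Fin N) (⟨j, hjN⟩ : Fin N)) (r (⟨j, hjN⟩ : Fin N) t) :=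
        hu.2.2.2 _ _ _
      have h4 : r (⟨j+1, hj1N⟩ : Fin N) (⟨j, hjN⟩ : Fin N)
          = r (⟨j, hjN⟩ : Fin N) (⟨j+1, hj1N⟩ : Fin N) := hu.2.1 _ _
      have h5 : r (⟨j, hjN⟩ : Fin N) t = m := by
        have he : (⟨j, hjN⟩ : Fin N) = jF := Fin.ext rfl
        rw [he, hjval]
      rw [h4] at h3
      have h6 : r (⟨j+1, hj1N⟩ : Fin N) t ≤ m := h3.trans (max_le hcon2' h5.le)
      linarith
    -- the transposition moving the new point to position j+1
    set τ := Equiv.swap (⟨j+1, hj1N⟩ : Fin N) (⟨b+1, hb⟩ : Fin N) with hτdef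
    have hT1 : ∀ i : Fin N, i.1 < j + 1 → τ i = i := by
      intro i hi
      apply Equiv.swap_apply_of_ne_of_ne
      · intro h
        have := congrArg Fin.val h
        simp at this
        omega
      · intro h
        have := congrArg Fin.val h
        simp at this
        omega
    have hT2 : τ ⟨j+1, hj1N⟩ = (⟨b+1, hb⟩ : Fin N) := Equiv.swap_apply_left _ _
    have hu' : IsUltramat (fun i p => r (τ i) (τ p)) :=
      ⟨fun i p => hu.1 _ _, fun i p => hu.2.1 _ _, fun i => hu.2.2.1 _,
        fun i p k => hu.2.2.2 _ _ _⟩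
    -- the lengths agree strictly below j+2
    have hagree : ∀ mth : ℕ, mth < j + 2 → ell r mth = ell (fun i p => r (τ i) (τ p)) mth := by
      intro mth hmth
      rcases Nat.lt_or_ge mth 2 with h2 | h2
      · rw [ell_small r h2, ell_small _ h2]
      · have hmN : mth ≤ N := by omega
        rw [ell_eq r h2 hmN, ell_eq _ h2 hmN]
        congr 1
        unfold Eset
        have hsame2 : ∀ σ : Equiv.Perm (Fin mth),
            (∑ i : Fin mth, (fun i p => r (τ i) (τ p)) (Fin.castLE hmN i) (Fin.castLE hmN (σ i)))
            = ∑ i : Fin mth, r (Fin.castLE hmN i) (Fin.castLE hmN (σ i)) := by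
          intro σ
          apply Finset.sum_congr rfl
          intro i _
          show r (τ (Fin.castLE hmN i)) (τ (Fin.castLE hmN (σ i))) = _
          rw [hT1 _ (show (Fin.castLE hmN i).1 < j + 1 by
              have := i.2; simp only [Fin.coe_castLE]; omega),
            hT1 _ (show (Fin.castLE hmN (σ i)).1 < j + 1 by
              have := (σ i).2; simp only [Fin.coe_castLE]; omega)]
        congr 1
        ext x
        constructor
        · rintro ⟨σ, hc1, hc2, rfl⟩
          exact ⟨σ, hc1, hc2, (hsame2 σ).symm⟩
        · rintro ⟨σ, hc1, hc2, rfl⟩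
          exact ⟨σ, hc1, hc2, hsame2 σ⟩
    -- the minimal new distance for the rearranged matrix at step j+1 is m
    have hmm' : mmF (fun i p => r (τ i) (τ p)) (j+1) = m := by
      apply _root_.le_antisymm
      · have hjF1 : jF ∈ pfx N (j+1) := mem_pfx.mpr (show jF.1 < j+1 by omega)
        have hb1 := mmF_le (fun i p => r (τ i) (τ p)) (show 1 ≤ j+1 by omega) hj1N hjF1
        have he : (fun i p => r (τ i) (τ p)) jF (⟨j+1, hj1N⟩ : Fin N) = m := by
          show r (τ jF) (τ ⟨j+1, hj1N⟩) = m
          rw [hT1 jF (show jF.1 < j + 1 by omega), hT2]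
          exact hjval
        rw [← he]
        exact hb1
      · obtain ⟨x, hx, he⟩ := exists_mmF (fun i p => r (τ i) (τ p)) (show 1 ≤ j+1 by omega) hj1N
        rw [← he]
        show m ≤ r (τ x) (τ ⟨j+1, hj1N⟩)
        rw [hT1 x (mem_pfx.mp hx), hT2]
        exact mmF_le r (by omega) hb (pfx_mono (by omega) hx)
    -- the depths agree at step j+1
    have hDD' : DDF (fun i p => r (τ i) (τ p)) (j+1) = DDF r (j+1) := by
      have hsame : ∀ x ∈ pfx N (j+1), ∀ y ∈ pfx N (j+1), r (τ x) (τ y) = r x y := by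
        intro x hx y hy
        rw [hT1 x (mem_pfx.mp hx), hT1 y (mem_pfx.mp hy)]
      apply _root_.le_antisymm
      · obtain ⟨x, hx, y, hy, he⟩ := exists_DDF (fun i p => r (τ i) (τ p))
          (show 1 ≤ j+1 by omega) hj1N.le
        rw [← he, hsame x hx y hy]
        exact le_DDF r (by omega) hj1N.le hx hy
      · obtain ⟨x, hx, y, hy, he⟩ := exists_DDF r (show 1 ≤ j+1 by omega) hj1N.le
        rw [← he, ← hsame x hx y hy]
        exact le_DDF (fun i p => r (τ i) (τ p)) (by omega) hj1N.le hx hy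
    -- strict decrease of the length at step j+2
    have hM1 : 2 * ell r (j+2) = 2 * ell r (j+1)
        + max (mmF r (j+1)) (2 * mmF r (j+1) - DDF r (j+1)) :=
      Mrec hu (j+1) (by omega) hj1N
    have hM2 : 2 * ell (fun i p => r (τ i) (τ p)) (j+2)
        = 2 * ell (fun i p => r (τ i) (τ p)) (j+1)
        + max (mmF (fun i p => r (τ i) (τ p)) (j+1))
            (2 * mmF (fun i p => r (τ i) (τ p)) (j+1)
              - DDF (fun i p => r (τ i) (τ p)) (j+1)) :=
      Mrec hu' (j+1) (by omega) hj1N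
    have hmaxlt : max (mmF (fun i p => r (τ i) (τ p)) (j+1))
          (2 * mmF (fun i p => r (τ i) (τ p)) (j+1) - DDF (fun i p => r (τ i) (τ p)) (j+1))
        < max (mmF r (j+1)) (2 * mmF r (j+1) - DDF r (j+1)) := by
      rw [hmm', hDD']
      apply max_lt
      · exact lt_of_lt_of_le hC1 (le_max_left _ _)
      · apply lt_of_lt_of_le _ (le_max_right _ _)
        linarith
    have he1 : ell r (j+1) = ell (fun i p => r (τ i) (τ p)) (j+1) := hagree (j+1) (by omega)
    have hlt2 : ell (fun i p => r (τ i) (τ p)) (j+2) < ell r (j+2) := by linarith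
    -- contradiction with length-minimality
    rcases hmin τ with hall | ⟨n', hn'N, hbel, hstrict⟩
    · have := hall (j+2) (by omega)
      linarith
    · rcases lt_trichotomy n' (j+2) with hlt3 | heq3 | hgt3
      · have := hagree n' (by omega)
        rw [this] at hstrict
        exact lt_irrefl _ hstrict
      · rw [heq3] at hstrict
        linarith
      · have := hbel (j+2) hgt3
        linarith

end NearestSec

end Ultra

/-- For a positive ultrametric on `{1,…,N}` whose enumeration is length-minimal, the
distances are recovered recursively from the subtree lengths: for `2 ≤ n ≤ N` and
`1 ≤ k ≤ n−1`, `r(k,n) = max(r(k,n−1), 2(ℓ_n − ℓ_{n−1} − (d_n − d_{n−1})))`.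
(Point `m` is encoded as the index `m−1 : Fin N`; for `k = n−1` the term `r(k,n−1)`
is `r(n−1,n−1) = 0`.) -/
theorem lengthMinimal_dist_from_lengths
    {N : ℕ} (hN : 2 ≤ N) (r : Fin N → Fin N → ℝ)
    (hult : IsUltramat r) (hpos : ∀ i j : Fin N, i ≠ j → 0 < r i j)
    (hmin : LengthMinimal r)
    (n : ℕ) (hn2 : 2 ≤ n) (hnN : n ≤ N)
    (k : ℕ) (hk1 : 1 ≤ k) (hk : k ≤ n - 1) :
    r ⟨k - 1, by omega⟩ ⟨n - 1, by omega⟩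
      = max (r ⟨k - 1, by omega⟩ ⟨n - 2, by omega⟩)
          (2 * (ell r n - ell r (n - 1) - (depthFn r n - depthFn r (n - 1)))) := by
  obtain ⟨b, rfl⟩ : ∃ b, n = b + 2 := ⟨n - 2, by omega⟩
  have hbN : b < N := by omega
  have hb1N : b + 1 < N := by omega
  have hb2N : b + 2 ≤ N := hnN
  have hkN : k - 1 < N := by omega
  show r ⟨k-1, hkN⟩ ⟨b+1, hb1N⟩ = max (r ⟨k-1, hkN⟩ ⟨b, hbN⟩)
    (2 * (ell r (b+2) - ell r (b+1) - (depthFn r (b+2) - depthFn r (b+1))))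
  have hmrec : 2 * ell r (b+2) = 2 * ell r (b+1)
      + max (Ultra.mmF r (b+1)) (2 * Ultra.mmF r (b+1) - Ultra.DDF r (b+1)) :=
    Ultra.Mrec hult (b+1) (by omega) hb1N
  have hdd : Ultra.DDF r (b+2) = max (Ultra.DDF r (b+1)) (Ultra.mmF r (b+1)) :=
    Ultra.DD_succ hult (by omega) hb1N
  have hd2 : 2 * depthFn r (b+2) = Ultra.DDF r (b+2) := Ultra.depth_eq r (by omega) hb2N
  have hd1 : 2 * depthFn r (b+1) = Ultra.DDF r (b+1) := Ultra.depth_eq r (by omega) (by omega)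
  have hnear : Ultra.mmF r (b+1) = r ⟨b, hbN⟩ ⟨b+1, hb1N⟩ :=
    Ultra.nearest hult hmin b hb1N
  set m := Ultra.mmF r (b+1) with hm
  set D := Ultra.DDF r (b+1) with hD
  have harith : 2 * (ell r (b+2) - ell r (b+1) - (depthFn r (b+2) - depthFn r (b+1))) = m := by
    rcases le_total m D with h | h
    · rw [max_eq_left (show 2*m - D ≤ m by linarith)] at hmrec
      rw [max_eq_left h] at hdd
      linarith
    · rw [max_eq_right (show m ≤ 2*m - D by linarith)] at hmrec
      rw [max_eq_right h] at hdd
      linarith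
  rw [harith, hnear]
  have hzx_le : r ⟨b, hbN⟩ ⟨b+1, hb1N⟩ ≤ r ⟨k-1, hkN⟩ ⟨b+1, hb1N⟩ := by
    rw [← hnear]
    exact Ultra.mmF_le r (by omega) hb1N (Ultra.mem_pfx.mpr (show k-1 < b+1 by omega))
  apply _root_.le_antisymm
  · exact hult.2.2.2 _ _ _
  · apply max_le
    · have h5 := hult.2.2.2 (⟨k-1, hkN⟩ : Fin N) (⟨b+1, hb1N⟩ : Fin N) (⟨b, hbN⟩ : Fin N)
      have h6 : r (⟨b+1, hb1N⟩ : Fin N) (⟨b, hbN⟩ : Fin N)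
          = r (⟨b, hbN⟩ : Fin N) (⟨b+1, hb1N⟩ : Fin N) := hult.2.1 _ _
      rw [h6] at h5
      exact h5.trans (max_le le_rfl hzx_le)
    · exact hzx_le
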